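/- For every R with 1 ≤ R ≤ A, the operator d_R = ∑_{S ⊆ {1,...,A}, |S| = R} ∏_{μ∈S} ∂/∂z_μ annihilates the Vandermonde polynomial: d_R ( ∏_{1≤μ<ν≤A} (z_μ − z_ν) ) = 0. -/

import Mathlib

open MvPolynomial

/-- The Vandermonde (Jastrow) polynomial `∏_{μ<ν} (z_μ - z_ν)` in `A` variables over `ℂ`. -/
noncomputable def vand (A : ℕ) : MvPolynomial (Fin A) ℂ :=
  ∏ p ∈ Finset.univ.filter (fun p : Fin A × Fin A => p.1 < p.2), (X p.1 - X p.2)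

/-- Application of the product of derivative operators `∏_μ ∂_μ^{n_μ}` to a polynomial. -/
noncomputable def pdPow {A : ℕ} (n : Fin A → ℕ) (P : MvPolynomial (Fin A) ℂ) :
    MvPolynomial (Fin A) ℂ :=
  (List.finRange A).foldr (fun μ Q => (fun Q' => pderiv μ Q')^[n μ] Q) P

namespace DR

variable {A : ℕ}

lemma coeff_pderiv (i : Fin A) (Q : MvPolynomial (Fin A) ℂ) (m : Fin A →₀ ℕ) :
    coeff m (pderiv i Q) = ((m i : ℂ) + 1) * coeff (m + Finsupp.single i 1) Q := by
  induction Q using MvPolynomial.induction_on' with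
  | add p q hp hq => simp [hp, hq, mul_add]
  | monomial s a =>
    rw [pderiv_monomial]
    rw [coeff_monomial, coeff_monomial]
    by_cases h : s = m + Finsupp.single i 1
    · subst h
      have h1 : (m + Finsupp.single i 1) - Finsupp.single i 1 = m := by
        exact add_tsub_cancel_right _ _
      have h2 : ((m + Finsupp.single i 1) : Fin A →₀ ℕ) i = m i + 1 := by
        simp
      rw [if_pos h1, h2]
      simp
      push_cast
      ring
    · rw [if_neg h]
      by_cases hsi : s i = 0
      · simp [hsi]
      · have hle : Finsupp.single i 1 ≤ s := by
          rw [Finsupp.single_le_iff]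
          omega
        have : s - Finsupp.single i 1 ≠ m := by
          intro hc
          apply h
          rw [← hc, tsub_add_cancel_of_le hle]
        rw [if_neg this, mul_zero]

lemma pderiv_comm (i j : Fin A) (Q : MvPolynomial (Fin A) ℂ) :
    pderiv i (pderiv j Q) = pderiv j (pderiv i Q) := by
  ext m
  rw [coeff_pderiv, coeff_pderiv, coeff_pderiv, coeff_pderiv]
  rcases eq_or_ne i j with rfl | hij
  · ring
  · have h1 : ((m + Finsupp.single j 1) : Fin A →₀ ℕ) i = m i := by
      simp [Finsupp.single_apply, hij.symm]
    have h2 : ((m + Finsupp.single i 1) : Fin A →₀ ℕ) j = m j := by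
      simp [Finsupp.single_apply, hij]
    rw [h1, h2, add_right_comm m (Finsupp.single i 1)]
    ring

/-- degree of a monomial -/
def dm (m : Fin A →₀ ℕ) : ℕ := m.sum fun _ e => e

lemma dm_add_single (m : Fin A →₀ ℕ) (i : Fin A) :
    dm (m + Finsupp.single i 1) = dm m + 1 := by
  unfold dm
  rw [Finsupp.sum_add_index (by simp) (by simp), Finsupp.sum_single_index rfl]

lemma support_pderiv {i : Fin A} {Q : MvPolynomial (Fin A) ℂ} {m : Fin A →₀ ℕ}
    (hm : m ∈ (pderiv i Q).support) : ∃ m' ∈ Q.support, dm m' = dm m + 1 := by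
  rw [mem_support_iff, coeff_pderiv] at hm
  refine ⟨m + Finsupp.single i 1, ?_, dm_add_single m i⟩
  rw [mem_support_iff]
  intro h
  rw [h, mul_zero] at hm
  exact hm rfl

lemma support_pderiv_iter {i : Fin A} {k : ℕ} :
    ∀ {Q : MvPolynomial (Fin A) ℂ} {m : Fin A →₀ ℕ},
      m ∈ ((fun Q' => pderiv i Q')^[k] Q).support → ∃ m' ∈ Q.support, dm m' = dm m + k := by
  induction k with
  | zero => intro Q m hm; exact ⟨m, hm, rfl⟩
  | succ k ih =>
    intro Q m hm
    rw [Function.iterate_succ_apply'] at hm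
    obtain ⟨m1, hm1, hd1⟩ := support_pderiv hm
    obtain ⟨m', hm', hd'⟩ := ih hm1
    exact ⟨m', hm', by omega⟩

lemma support_foldr (n : Fin A → ℕ) :
    ∀ (l : List (Fin A)) (Q : MvPolynomial (Fin A) ℂ) (m : Fin A →₀ ℕ),
      m ∈ (l.foldr (fun μ Q => (fun Q' => pderiv μ Q')^[n μ] Q) Q).support →
      ∃ m' ∈ Q.support, dm m' = dm m + (l.map n).sum := by
  intro l
  induction l with
  | nil => intro Q m hm; exact ⟨m, hm, by simp⟩
  | cons a l ih =>
    intro Q m hm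
    rw [List.foldr_cons] at hm
    obtain ⟨m1, hm1, hd1⟩ := support_pderiv_iter hm
    obtain ⟨m', hm', hd'⟩ := ih Q m1 hm1
    refine ⟨m', hm', by simp; omega⟩

lemma support_pdPow {n : Fin A → ℕ} {Q : MvPolynomial (Fin A) ℂ} {m : Fin A →₀ ℕ}
    (hm : m ∈ (pdPow n Q).support) : ∃ m' ∈ Q.support, dm m' = dm m + ∑ μ, n μ := by
  obtain ⟨m', h1, h2⟩ := support_foldr n (List.finRange A) Q m hm
  refine ⟨m', h1, ?_⟩
  rw [h2, Fin.sum_univ_def]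

lemma Ioi_eq_filter (i : Fin A) : Finset.Ioi i = Finset.univ.filter (fun j => i < j) := by
  ext j; simp

lemma vand_nested : vand A = ∏ i : Fin A, ∏ j ∈ Finset.Ioi i, (X i - X j) := by
  rw [vand, Finset.prod_filter]
  rw [Fintype.prod_prod_type (fun p : Fin A × Fin A => if p.1 < p.2 then (X p.1 - X p.2 : MvPolynomial (Fin A) ℂ) else 1)]
  refine Finset.prod_congr rfl fun i _ => ?_
  rw [Ioi_eq_filter, Finset.prod_filter]

lemma totalDegree_XsubX (i j : Fin A) : (X i - X j : MvPolynomial (Fin A) ℂ).totalDegree ≤ 1 := by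
  rw [sub_eq_add_neg]
  refine (totalDegree_add _ _).trans ?_
  rw [totalDegree_neg, totalDegree_X, totalDegree_X]
  simp

lemma totalDegree_vand_le : (vand A).totalDegree ≤ ∑ i ∈ Finset.range A, i := by
  rw [vand_nested]
  calc (∏ i : Fin A, ∏ j ∈ Finset.Ioi i, (X i - X j : MvPolynomial (Fin A) ℂ)).totalDegree
      ≤ ∑ i : Fin A, (∏ j ∈ Finset.Ioi i, (X i - X j : MvPolynomial (Fin A) ℂ)).totalDegree :=
        totalDegree_finset_prod _ _
    _ ≤ ∑ i : Fin A, ∑ j ∈ Finset.Ioi i, (X i - X j : MvPolynomial (Fin A) ℂ).totalDegree :=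
        Finset.sum_le_sum fun i _ => totalDegree_finset_prod _ _
    _ ≤ ∑ i : Fin A, ∑ _j ∈ Finset.Ioi i, 1 :=
        Finset.sum_le_sum fun i _ => Finset.sum_le_sum fun j _ => totalDegree_XsubX i j
    _ = ∑ i : Fin A, (A - 1 - (i : ℕ)) := by simp [Fin.card_Ioi]
    _ = ∑ i ∈ Finset.range A, (A - 1 - i) := Fin.sum_univ_eq_sum_range _ _
    _ = ∑ i ∈ Finset.range A, i := Finset.sum_range_reflect (fun i => i) A

lemma vand_eq_det : vand A =
    (∏ i : Fin A, (-1 : MvPolynomial (Fin A) ℂ) ^ (Finset.Ioi i).card) *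
      (Matrix.vandermonde fun i : Fin A => (X i : MvPolynomial (Fin A) ℂ)).det := by
  rw [Matrix.det_vandermonde, vand_nested, ← Finset.prod_mul_distrib]
  refine Finset.prod_congr rfl fun i _ => ?_
  calc ∏ j ∈ Finset.Ioi i, (X i - X j : MvPolynomial (Fin A) ℂ)
      = ∏ j ∈ Finset.Ioi i, ((-1) * (X j - X i : MvPolynomial (Fin A) ℂ)) :=
        Finset.prod_congr rfl fun j _ => by ring
    _ = (-1 : MvPolynomial (Fin A) ℂ) ^ (Finset.Ioi i).card *
          ∏ j ∈ Finset.Ioi i, (X j - X i : MvPolynomial (Fin A) ℂ) := by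
        rw [Finset.prod_mul_distrib, Finset.prod_const]

lemma rename_swap_vand {i j : Fin A} (hij : i ≠ j) :
    rename (Equiv.swap i j) (vand A) = - vand A := by
  set σ := Equiv.swap i j with hσ
  set V : Matrix (Fin A) (Fin A) (MvPolynomial (Fin A) ℂ) :=
    Matrix.vandermonde (fun i : Fin A => (X i : MvPolynomial (Fin A) ℂ)) with hV
  have hmap : V.map (rename σ) = V.submatrix σ id := by
    ext a b
    simp [hV, Matrix.vandermonde, map_pow]
  have hdet : rename σ V.det = - V.det := by
    rw [AlgHom.map_det (rename σ) V, AlgHom.mapMatrix_apply, hmap, Matrix.det_permute]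
    simp [hσ, Equiv.Perm.sign_swap hij]
  rw [vand_eq_det, map_mul, hdet]
  have hc : rename σ (∏ i : Fin A, (-1 : MvPolynomial (Fin A) ℂ) ^ (Finset.Ioi i).card)
      = ∏ i : Fin A, (-1 : MvPolynomial (Fin A) ℂ) ^ (Finset.Ioi i).card := by
    simp
  rw [hc]; ring

lemma rename_pderiv_iter (σ : Equiv.Perm (Fin A)) (μ : Fin A) (k : ℕ)
    (Q : MvPolynomial (Fin A) ℂ) :
    rename σ ((fun Q' => pderiv μ Q')^[k] Q) = (fun Q' => pderiv (σ μ) Q')^[k] (rename σ Q) := by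
  induction k with
  | zero => rfl
  | succ k ih =>
    rw [Function.iterate_succ_apply', Function.iterate_succ_apply', ← ih,
      pderiv_rename σ.injective]

lemma rename_foldr (σ : Equiv.Perm (Fin A)) (n : Fin A → ℕ) :
    ∀ (l : List (Fin A)) (Q : MvPolynomial (Fin A) ℂ),
      rename σ (l.foldr (fun μ Q => (fun Q' => pderiv μ Q')^[n μ] Q) Q) =
      (l.map σ).foldr (fun ν Q => (fun Q' => pderiv ν Q')^[(fun ν => n (σ.symm ν)) ν] Q)
        (rename σ Q) := by
  intro l
  induction l with
  | nil => intro Q; rfl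
  | cons a l ih =>
    intro Q
    rw [List.foldr_cons, List.map_cons, List.foldr_cons, rename_pderiv_iter, ih]
    simp only [Equiv.symm_apply_apply]

lemma iter_iter_comm (μ ν : Fin A) (a b : ℕ) (Q : MvPolynomial (Fin A) ℂ) :
    (fun Q' => pderiv μ Q')^[a] ((fun Q' => pderiv ν Q')^[b] Q) =
    (fun Q' => pderiv ν Q')^[b] ((fun Q' => pderiv μ Q')^[a] Q) := by
  have h : Function.Commute (fun Q' : MvPolynomial (Fin A) ℂ => pderiv μ Q')
      (fun Q' => pderiv ν Q') := fun Q' => pderiv_comm μ ν Q'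
  exact (h.iterate_iterate a b) Q

lemma foldr_perm_eq (n : Fin A → ℕ) (l₁ l₂ : List (Fin A)) (h : l₁.Perm l₂)
    (Q : MvPolynomial (Fin A) ℂ) :
    l₁.foldr (fun μ Q => (fun Q' => pderiv μ Q')^[n μ] Q) Q =
    l₂.foldr (fun μ Q => (fun Q' => pderiv μ Q')^[n μ] Q) Q := by
  haveI : LeftCommutative (fun μ (Q : MvPolynomial (Fin A) ℂ) =>
      (fun Q' => pderiv μ Q')^[n μ] Q) := ⟨fun a b c => iter_iter_comm a b (n a) (n b) c⟩
  exact h.foldr_eq Q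

lemma map_finRange_perm (σ : Equiv.Perm (Fin A)) :
    ((List.finRange A).map σ).Perm (List.finRange A) := by
  apply List.perm_of_nodup_nodup_toFinset_eq
  · exact (List.nodup_finRange A).map σ.injective
  · exact List.nodup_finRange A
  · ext x
    simp [List.mem_map]
    exact ⟨σ.symm x, by simp⟩

lemma rename_pdPow (σ : Equiv.Perm (Fin A)) (n : Fin A → ℕ) (Q : MvPolynomial (Fin A) ℂ) :
    rename σ (pdPow n Q) = pdPow (fun ν => n (σ.symm ν)) (rename σ Q) := by
  rw [pdPow, rename_foldr σ n, pdPow]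
  exact foldr_perm_eq _ _ _ (map_finRange_perm σ) _

lemma iter_neg (μ : Fin A) (k : ℕ) (Q : MvPolynomial (Fin A) ℂ) :
    (fun Q' => pderiv μ Q')^[k] (-Q) = -((fun Q' => pderiv μ Q')^[k] Q) := by
  induction k with
  | zero => rfl
  | succ k ih => rw [Function.iterate_succ_apply', Function.iterate_succ_apply', ih, map_neg]

lemma pdPow_neg (n : Fin A → ℕ) (Q : MvPolynomial (Fin A) ℂ) :
    pdPow n (-Q) = - pdPow n Q := by
  rw [pdPow, pdPow]
  induction (List.finRange A) with
  | nil => rfl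
  | cons a l ih => rw [List.foldr_cons, List.foldr_cons, ih, iter_neg]

lemma strictMono_fin_le {f : Fin A → ℕ} (hf : StrictMono f) :
    ∀ j (hj : j < A), j ≤ f ⟨j, hj⟩ := by
  intro j
  induction j with
  | zero => intro hj; exact Nat.zero_le _
  | succ j ih =>
    intro hj
    have hj' : j < A := by omega
    have h1 : f ⟨j, hj'⟩ < f ⟨j + 1, hj⟩ := hf (by simp [Fin.lt_def])
    have h2 := ih hj'
    omega

lemma sum_le_of_injective {m : Fin A →₀ ℕ} (hm : Function.Injective (m : Fin A → ℕ)) :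
    ∑ i ∈ Finset.range A, i ≤ dm m := by
  have hdm : dm m = ∑ μ : Fin A, m μ := Finsupp.sum_fintype _ _ (fun _ => rfl)
  set T := Finset.image (fun μ => m μ) Finset.univ with hT
  have hcard : T.card = A := by
    rw [hT, Finset.card_image_of_injective _ hm, Finset.card_univ, Fintype.card_fin]
  set e := T.orderIsoOfFin hcard with he
  have hmono : StrictMono fun k : Fin A => ((e k : ℕ)) := by
    intro a b hab
    exact_mod_cast e.lt_iff_lt.mpr hab
  have hle : ∀ k : Fin A, (k : ℕ) ≤ (e k : ℕ) := by
    intro k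
    have := strictMono_fin_le hmono k.1 k.2
    simpa using this
  calc ∑ i ∈ Finset.range A, i = ∑ k : Fin A, (k : ℕ) := (Fin.sum_univ_eq_sum_range _ _).symm
    _ ≤ ∑ k : Fin A, (e k : ℕ) := Finset.sum_le_sum fun k _ => hle k
    _ = ∑ t : T, (t : ℕ) := Equiv.sum_comp e.toEquiv (fun t => (t : ℕ))
    _ = ∑ t ∈ T, t := by simpa using Finset.sum_coe_sort T (fun t : ℕ => t)
    _ = ∑ μ : Fin A, m μ := Finset.sum_image (fun a _ b _ h => hm h)
    _ = dm m := hdm.symm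

lemma rename_swap_sum (R : ℕ) {i j : Fin A} (hij : i ≠ j) :
    rename (Equiv.swap i j) (∑ S ∈ Finset.powersetCard R (Finset.univ : Finset (Fin A)),
      pdPow (fun μ => if μ ∈ S then 1 else 0) (vand A)) =
    - ∑ S ∈ Finset.powersetCard R (Finset.univ : Finset (Fin A)),
      pdPow (fun μ => if μ ∈ S then 1 else 0) (vand A) := by
  set σ := Equiv.swap i j with hσ
  rw [map_sum]
  have step : ∀ S ∈ Finset.powersetCard R (Finset.univ : Finset (Fin A)),
      rename σ (pdPow (fun μ => if μ ∈ S then 1 else 0) (vand A)) =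
      - pdPow (fun μ => if μ ∈ S.image σ then 1 else 0) (vand A) := by
    intro S _
    rw [rename_pdPow, rename_swap_vand hij, pdPow_neg]
    have hfun : (fun ν => if σ.symm ν ∈ S then (1:ℕ) else 0) =
        (fun ν => if ν ∈ S.image σ then 1 else 0) := by
      funext ν
      congr 1
      simp only [eq_iff_iff, Finset.mem_image]
      constructor
      · intro h; exact ⟨σ.symm ν, h, by simp⟩
      · rintro ⟨a, ha, rfl⟩; simpa using ha
    rw [hfun]
  rw [Finset.sum_congr rfl step, Finset.sum_neg_distrib]
  congr 1
  refine Finset.sum_nbij' (fun S => S.image σ) (fun S => S.image σ.symm) ?_ ?_ ?_ ?_ ?_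
  · intro S hS
    rw [Finset.mem_powersetCard] at hS ⊢
    exact ⟨Finset.subset_univ _, by rw [Finset.card_image_of_injective _ σ.injective, hS.2]⟩
  · intro S hS
    rw [Finset.mem_powersetCard] at hS ⊢
    exact ⟨Finset.subset_univ _, by rw [Finset.card_image_of_injective _ σ.symm.injective, hS.2]⟩
  · intro S _
    simp [Finset.image_image]
  · intro S _
    simp [Finset.image_image]
  · intro S _
    rfl

end DR

/-- For every `R` with `1 ≤ R ≤ A`, the operator
`d_R = ∑_{S ⊆ {1,...,A}, |S| = R} ∏_{μ∈S} ∂_μ` annihilates the Vandermonde polynomial. -/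
theorem dR_vand_eq_zero (A R : ℕ) (h1 : 1 ≤ R) (h2 : R ≤ A) :
    ∑ S ∈ Finset.powersetCard R (Finset.univ : Finset (Fin A)),
      pdPow (fun μ => if μ ∈ S then 1 else 0) (vand A) = 0 := by
  set P := ∑ S ∈ Finset.powersetCard R (Finset.univ : Finset (Fin A)),
      pdPow (fun μ => if μ ∈ S then 1 else 0) (vand A) with hP
  apply MvPolynomial.ext
  intro m
  rw [coeff_zero]
  by_cases hinj : Function.Injective (m : Fin A → ℕ)
  · rw [hP, MvPolynomial.coeff_sum]
    apply Finset.sum_eq_zero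
    intro S hS
    by_contra hne
    have hmem : m ∈ (pdPow (fun μ => if μ ∈ S then 1 else 0) (vand A)).support :=
      mem_support_iff.mpr hne
    obtain ⟨m', hm', hd⟩ := DR.support_pdPow hmem
    have hsum : (∑ μ : Fin A, if μ ∈ S then 1 else 0) = R := by
      rw [Finset.sum_ite_mem, Finset.univ_inter, ← Finset.card_eq_sum_ones]
      exact (Finset.mem_powersetCard.mp hS).2
    rw [hsum] at hd
    have hA : DR.dm m' ≤ ∑ i ∈ Finset.range A, i :=
      le_trans (MvPolynomial.le_totalDegree hm') DR.totalDegree_vand_le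
    have hB := DR.sum_le_of_injective hinj
    omega
  · obtain ⟨i, j, hmij, hij⟩ := Function.not_injective_iff.mp hinj
    have hsym := DR.rename_swap_sum (A := A) R hij
    rw [← hP] at hsym
    have hmd : Finsupp.mapDomain (Equiv.swap i j) m = m := by
      ext k
      rw [Finsupp.mapDomain_equiv_apply]
      rcases eq_or_ne k i with rfl | hki
      · simp [Equiv.symm_swap, Equiv.swap_apply_left, hmij]
      · rcases eq_or_ne k j with rfl | hkj
        · simp [Equiv.symm_swap, Equiv.swap_apply_right, hmij]
        · simp [Equiv.swap_apply_of_ne_of_ne hki hkj]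
    have hco := MvPolynomial.coeff_rename_mapDomain (Equiv.swap i j)
      (Equiv.swap i j).injective P m
    rw [hmd, hsym, MvPolynomial.coeff_neg] at hco
    have hzero : coeff m P + coeff m P = 0 := by
      nth_rewrite 1 [← hco]
      exact neg_add_cancel _
    exact add_self_eq_zero.mp hzero
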